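/- arXiv:2501.04127 — 2 statements merged into one kernel-verified Lean document; each statement's English description precedes it below -/
import Mathlib

section
/- Let X be a compact Hausdorff space and let γ = (γ_1, …, γ_N) be an iterated function system on X such that every γ_k is a topological embedding. Let 𝕏 ⊆ X be dense, completely invariant under γ, and comeager in X, with γ_1(𝕏), …, γ_N(𝕏) pairwise disjoint and each restriction γ_k|_𝕏 injective. Assume there exists a dense open subset U of X such that γ_1(U), …, γ_N(U) are pairwise disjoint open subsets of X contained in U, and that 𝕏 ⊆ U. Assume γ is essentially free. Define S := (X ∖ 𝕏) ∪ ⋃_{𝐤 ≠ 𝐥} {x ∈ X : γ_𝐤(x) = γ_𝐥(x)}, the union over all pairs of distinct finite index sequences, and let 𝕏' be the complement in X of the smallest completely γ-invariant subset of X containing S. Then: (1) 𝕏' is dense in X and completely invariant under γ; (2) γ_1(𝕏'), …, γ_N(𝕏') are pairwise disjoint; (3) each restriction γ_k|_{𝕏'} is injective; and (4) 𝕏' is disjoint from ⋃_{𝐣 ≠ 𝐤} {x ∈ X : γ_𝐣(x) = γ_𝐤(x)}. -/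
/-- A subset `S` of `X` is completely invariant under the iterated function system `γ`
if `γ k '' S ⊆ S` and `γ k ⁻¹' S ⊆ S` for every index `k`. -/
def CompletelyInvariant {X : Type*} {N : ℕ} (γ : Fin N → X → X) (S : Set X) : Prop :=
  ∀ k : Fin N, γ k '' S ⊆ S ∧ γ k ⁻¹' S ⊆ S

/-- For a finite sequence `𝐤 = (k_n, …, k_1)` of indices, encoded as the list
`[k_n, …, k_1]`, `seqComp γ 𝐤` is the composition `γ_{k_n} ∘ ⋯ ∘ γ_{k_1}`
(the identity for the empty sequence). -/
def seqComp {X : Type*} {N : ℕ} (γ : Fin N → X → X) (l : List (Fin N)) : X → X :=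
  l.foldr (fun k f => γ k ∘ f) id

/-- An iterated function system `γ` is essentially free if for all distinct finite index
sequences `𝐤` and `𝐥` the coincidence set `{x | γ_𝐤(x) = γ_𝐥(x)}` is nowhere dense. -/
def EssentiallyFree {X : Type*} [TopologicalSpace X] {N : ℕ} (γ : Fin N → X → X) : Prop :=
  ∀ k l : List (Fin N), k ≠ l → IsNowhereDense {x : X | seqComp γ k x = seqComp γ l x}

section Aux

variable {X : Type*} [TopologicalSpace X]

lemma isMeagre_iUnion' {ι : Type*} [Countable ι] {s : ι → Set X}
    (h : ∀ i, IsMeagre (s i)) : IsMeagre (⋃ i, s i) := by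
  rw [IsMeagre, Set.compl_iUnion]
  exact countable_iInter_mem.mpr h

lemma IsMeagre.union' {s t : Set X} (hs : IsMeagre s) (ht : IsMeagre t) :
    IsMeagre (s ∪ t) := by
  rw [IsMeagre, Set.compl_union]
  exact Filter.inter_mem hs ht

lemma IsNowhereDense.isMeagre' {s : Set X} (hs : IsNowhereDense s) : IsMeagre s := by
  rw [isMeagre_iff_countable_union_isNowhereDense]
  exact ⟨{s}, by simpa using hs, Set.countable_singleton s, by simp⟩

lemma IsNowhereDense.mono' {s t : Set X} (hs : IsNowhereDense s) (hts : t ⊆ s) :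
    IsNowhereDense t := by
  rw [IsNowhereDense, ← Set.subset_empty_iff] at hs ⊢
  exact (interior_mono (closure_mono hts)).trans hs

/-- Image of a nowhere dense set under an embedding of a compact Hausdorff space
into itself is nowhere dense. -/
lemma img_nwd [CompactSpace X] [T2Space X] {f : X → X} (hf : Topology.IsEmbedding f)
    {M : Set X} (hM : IsNowhereDense M) : IsNowhereDense (f '' M) := by
  have hM' : interior (closure M) = ∅ := hM
  have hcl : IsClosed (f '' closure M) :=
    hf.continuous.isClosedMap _ isClosed_closure
  have h1 : IsNowhereDense (f '' closure M) := by
    rw [hcl.isNowhereDense_iff]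
    by_contra h
    obtain ⟨y, hy⟩ := Set.nonempty_iff_ne_empty.mpr h
    obtain ⟨x, hx, hxy⟩ := interior_subset hy
    have hopen : IsOpen (f ⁻¹' interior (f '' closure M)) :=
      isOpen_interior.preimage hf.continuous
    have hsub : f ⁻¹' interior (f '' closure M) ⊆ closure M := by
      intro z hz
      obtain ⟨w, hw, hwz⟩ := interior_subset hz
      rwa [hf.injective hwz] at hw
    have hne : x ∈ f ⁻¹' interior (f '' closure M) := by
      simp only [Set.mem_preimage, hxy]; exact hy
    have : x ∈ interior (closure M) := interior_maximal hsub hopen hne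
    rw [hM'] at this
    exact this
  exact h1.mono' (Set.image_mono subset_closure)

/-- Preimage of a nowhere dense set under an embedding, given a dense open set `U`
with open image, is nowhere dense. -/
lemma preimg_nwd {f : X → X} (hf : Topology.IsEmbedding f)
    {U : Set X} (hUopen : IsOpen U) (hUdense : Dense U) (hfU : IsOpen (f '' U))
    {M : Set X} (hM : IsNowhereDense M) : IsNowhereDense (f ⁻¹' M) := by
  have hM' : interior (closure M) = ∅ := hM
  have hcl : IsClosed (f ⁻¹' closure M) := isClosed_closure.preimage hf.continuous
  have h1 : IsNowhereDense (f ⁻¹' closure M) := by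
    rw [hcl.isNowhereDense_iff]
    by_contra h
    obtain ⟨x, hx⟩ := Set.nonempty_iff_ne_empty.mpr h
    set V := interior (f ⁻¹' closure M) with hV
    have hVopen : IsOpen V := isOpen_interior
    have hVU : (V ∩ U).Nonempty := hUdense.inter_open_nonempty V hVopen ⟨x, hx⟩
    obtain ⟨W, hWopen, hWpre⟩ := hf.isInducing.isOpen_iff.mp (hVopen.inter hUopen)
    have himg : f '' (V ∩ U) = W ∩ f '' U := by
      rw [← hWpre, Set.image_preimage_eq_inter_range]
      apply Set.Subset.antisymm
      · rintro y ⟨hyW, z, hz⟩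
        refine ⟨hyW, ?_⟩
        have hzW : z ∈ f ⁻¹' W := by rw [Set.mem_preimage, hz]; exact hyW
        rw [hWpre] at hzW
        exact ⟨z, hzW.2, hz⟩
      · rintro y ⟨hyW, z, hzU, hz⟩
        exact ⟨hyW, ⟨z, hz⟩⟩
    have hopen2 : IsOpen (f '' (V ∩ U)) := himg ▸ hWopen.inter hfU
    have hne2 : (f '' (V ∩ U)).Nonempty := hVU.image f
    have hsub2 : f '' (V ∩ U) ⊆ closure M := by
      rintro y ⟨z, ⟨hzV, _⟩, rfl⟩
      exact (interior_subset : interior (f ⁻¹' closure M) ⊆ f ⁻¹' closure M) hzV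
    obtain ⟨y, hy⟩ := hne2
    have : y ∈ interior (closure M) := interior_maximal hsub2 hopen2 hy
    rw [hM'] at this
    exact this
  exact h1.mono' (Set.preimage_mono subset_closure)

variable {N : ℕ}

/-- One saturation step. -/
def satStep (γ : Fin N → X → X) (A : Set X) : Set X :=
  A ∪ (⋃ k, γ k '' A) ∪ (⋃ k, γ k ⁻¹' A)

lemma subset_satStep (γ : Fin N → X → X) (A : Set X) : A ⊆ satStep γ A :=
  fun x hx => Or.inl (Or.inl hx)

lemma satStep_subset {γ : Fin N → X → X} {A T : Set X} (hT : CompletelyInvariant γ T)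
    (hAT : A ⊆ T) : satStep γ A ⊆ T := by
  intro x hx
  simp only [satStep, Set.mem_union] at hx
  rcases hx with (h | h) | h
  · exact hAT h
  · obtain ⟨k, hk⟩ := Set.mem_iUnion.mp h
    exact (hT k).1 (Set.image_mono hAT hk)
  · obtain ⟨k, hk⟩ := Set.mem_iUnion.mp h
    exact (hT k).2 (Set.preimage_mono hAT hk)

lemma satStep_meagre [CompactSpace X] [T2Space X] {γ : Fin N → X → X}
    (hemb : ∀ k, Topology.IsEmbedding (γ k))
    {U : Set X} (hUopen : IsOpen U) (hUdense : Dense U)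
    (himgopen : ∀ k, IsOpen (γ k '' U))
    {A : Set X} (hA : IsMeagre A) : IsMeagre (satStep γ A) := by
  obtain ⟨𝒮, h𝒮nwd, h𝒮cnt, h𝒮sub⟩ := isMeagre_iff_countable_union_isNowhereDense.mp hA
  have himg : ∀ k : Fin N, IsMeagre (γ k '' A) := by
    intro k
    have : γ k '' A ⊆ ⋃₀ ((Set.image (γ k)) '' 𝒮) := by
      intro y ⟨z, hz, hzy⟩
      obtain ⟨t, ht, hzt⟩ := h𝒮sub hz
      exact ⟨γ k '' t, ⟨t, ht, rfl⟩, ⟨z, hzt, hzy⟩⟩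
    refine (isMeagre_iff_countable_union_isNowhereDense.mpr
      ⟨(Set.image (γ k)) '' 𝒮, ?_, h𝒮cnt.image _, this⟩)
    rintro t ⟨s, hs, rfl⟩
    exact img_nwd (hemb k) (h𝒮nwd s hs)
  have hpre : ∀ k : Fin N, IsMeagre (γ k ⁻¹' A) := by
    intro k
    have : γ k ⁻¹' A ⊆ ⋃₀ ((Set.preimage (γ k)) '' 𝒮) := by
      intro y hy
      obtain ⟨t, ht, hzt⟩ := h𝒮sub hy
      exact ⟨γ k ⁻¹' t, ⟨t, ht, rfl⟩, hzt⟩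
    refine (isMeagre_iff_countable_union_isNowhereDense.mpr
      ⟨(Set.preimage (γ k)) '' 𝒮, ?_, h𝒮cnt.image _, this⟩)
    rintro t ⟨s, hs, rfl⟩
    exact preimg_nwd (hemb k) hUopen hUdense (himgopen k) (h𝒮nwd s hs)
  exact (hA.union' (isMeagre_iUnion' himg)).union' (isMeagre_iUnion' hpre)

end Aux

/-- Lemma 5.5.10: if `γ` is essentially free, `𝕏'`, the complement of the smallest completely
`γ`-invariant set containing `S := (X ∖ 𝕏) ∪ ⋃_{𝐤 ≠ 𝐥} {x : γ_𝐤(x) = γ_𝐥(x)}`, satisfies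
conditions (I′), (II′), (III′) and (V′). -/
theorem conditions_for_complement {X : Type*} [TopologicalSpace X] [CompactSpace X]
    [T2Space X] {N : ℕ} (γ : Fin N → X → X) (hemb : ∀ k, Topology.IsEmbedding (γ k))
    (𝕏 : Set X) (hdense : Dense 𝕏) (hinv : CompletelyInvariant γ 𝕏)
    (hcomeager : IsMeagre 𝕏ᶜ)
    (hdisj : ∀ j k : Fin N, j ≠ k → Disjoint (γ j '' 𝕏) (γ k '' 𝕏))
    (hinj : ∀ k : Fin N, Set.InjOn (γ k) 𝕏)
    (U : Set X) (hUopen : IsOpen U) (hUdense : Dense U)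
    (himgopen : ∀ k : Fin N, IsOpen (γ k '' U))
    (hUdisj : ∀ j k : Fin N, j ≠ k → Disjoint (γ j '' U) (γ k '' U))
    (hUsub : ∀ k : Fin N, γ k '' U ⊆ U)
    (hXU : 𝕏 ⊆ U)
    (hfree : EssentiallyFree γ) :
    letI S : Set X := 𝕏ᶜ ∪ ⋃ (k : List (Fin N)) (l : List (Fin N)) (_ : k ≠ l),
      {x : X | seqComp γ k x = seqComp γ l x}
    letI 𝕏' : Set X := (⋂₀ {T : Set X | CompletelyInvariant γ T ∧ S ⊆ T})ᶜ
    (Dense 𝕏' ∧ CompletelyInvariant γ 𝕏') ∧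
      (∀ j k : Fin N, j ≠ k → Disjoint (γ j '' 𝕏') (γ k '' 𝕏')) ∧
      (∀ k : Fin N, Set.InjOn (γ k) 𝕏') ∧
      Disjoint 𝕏' (⋃ (j : List (Fin N)) (k : List (Fin N)) (_ : j ≠ k),
        {x : X | seqComp γ j x = seqComp γ k x}) := by
  set S : Set X := 𝕏ᶜ ∪ ⋃ (k : List (Fin N)) (l : List (Fin N)) (_ : k ≠ l),
      {x : X | seqComp γ k x = seqComp γ l x} with hS
  set T₀ : Set X := ⋂₀ {T : Set X | CompletelyInvariant γ T ∧ S ⊆ T} with hT₀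
  -- S is meagre
  have hCoin : IsMeagre (⋃ (k : List (Fin N)) (l : List (Fin N)) (_ : k ≠ l),
      {x : X | seqComp γ k x = seqComp γ l x}) := by
    refine isMeagre_iUnion' fun k => isMeagre_iUnion' fun l => ?_
    by_cases hkl : k = l
    · subst hkl
      have : (⋃ (_ : k ≠ k), {x : X | seqComp γ k x = seqComp γ k x}) = ∅ := by
        simp
      rw [this]; exact IsMeagre.empty
    · have : (⋃ (_ : k ≠ l), {x : X | seqComp γ k x = seqComp γ l x})
          = {x : X | seqComp γ k x = seqComp γ l x} := by
        simp [hkl]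
      rw [this]
      exact (hfree k l hkl).isMeagre'
  have hSmeagre : IsMeagre S := hcomeager.union' hCoin
  -- the saturation
  let Sat : Set X := ⋃ n, (satStep γ)^[n] S
  have hSatInv : CompletelyInvariant γ Sat := by
    intro k
    constructor
    · rintro y ⟨x, hx, rfl⟩
      obtain ⟨n, hn⟩ := Set.mem_iUnion.mp hx
      refine Set.mem_iUnion.mpr ⟨n + 1, ?_⟩
      rw [Function.iterate_succ_apply']
      exact Or.inl (Or.inr (Set.mem_iUnion.mpr ⟨k, ⟨x, hn, rfl⟩⟩))
    · intro x hx
      obtain ⟨n, hn⟩ := Set.mem_iUnion.mp hx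
      refine Set.mem_iUnion.mpr ⟨n + 1, ?_⟩
      rw [Function.iterate_succ_apply']
      exact Or.inr (Set.mem_iUnion.mpr ⟨k, hn⟩)
  have hSSat : S ⊆ Sat := fun x hx => Set.mem_iUnion.mpr ⟨0, hx⟩
  have hT₀Sat : T₀ ⊆ Sat := Set.sInter_subset_of_mem ⟨hSatInv, hSSat⟩
  have hSatMeagre : IsMeagre Sat := by
    refine isMeagre_iUnion' fun n => ?_
    induction n with
    | zero => exact hSmeagre
    | succ n ih =>
      rw [Function.iterate_succ_apply']
      exact satStep_meagre hemb hUopen hUdense himgopen ih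
  have hT₀meagre : IsMeagre T₀ := hSatMeagre.mono hT₀Sat
  -- S ⊆ T₀
  have hST₀ : S ⊆ T₀ := fun x hx => Set.mem_sInter.mpr fun T hT => hT.2 hx
  -- T₀ is completely invariant
  have hT₀inv : CompletelyInvariant γ T₀ := by
    intro k
    constructor
    · rintro y ⟨x, hx, rfl⟩
      exact Set.mem_sInter.mpr fun T hT => (hT.1 k).1 ⟨x, Set.mem_sInter.mp hx T hT, rfl⟩
    · intro x hx
      exact Set.mem_sInter.mpr fun T hT =>
        (hT.1 k).2 (show γ k x ∈ T from Set.mem_sInter.mp hx T hT)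
  -- complement of a completely invariant set is completely invariant
  have hcompl : CompletelyInvariant γ T₀ᶜ := by
    intro k
    constructor
    · rintro y ⟨x, hx, rfl⟩ hy
      exact hx ((hT₀inv k).2 hy)
    · intro x hx hxT
      exact hx ((hT₀inv k).1 ⟨x, hxT, rfl⟩)
  -- 𝕏' ⊆ 𝕏
  have h𝕏'𝕏 : T₀ᶜ ⊆ 𝕏 := by
    intro x hx
    by_contra hx𝕏
    exact hx (hST₀ (Or.inl hx𝕏))
  have hdense' : Dense T₀ᶜ := dense_of_mem_residual hT₀meagre
  refine ⟨⟨hdense', hcompl⟩, ?_, ?_, ?_⟩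
  · intro j k hjk
    exact (hdisj j k hjk).mono (Set.image_mono h𝕏'𝕏) (Set.image_mono h𝕏'𝕏)
  · intro k
    exact (hinj k).mono h𝕏'𝕏
  · rw [Set.disjoint_left]
    intro x hx hxU
    exact hx (hST₀ (Or.inr hxU))
end

section
/- Let C ⊆ ℝ be the Cantor ternary set and define γ_1, γ_2 by γ_1(x) := x/3 and γ_2(x) := x/3 + 2/3. Then γ_1 and γ_2 map C into C, the images γ_1(C) and γ_2(C) are disjoint, and the iterated function system γ = (γ_1, γ_2) on C is essentially free: for all distinct finite sequences 𝐤 and 𝐥 of indices in {1, 2}, the set {x ∈ C : γ_𝐤(x) = γ_𝐥(x)} is nowhere dense in C. -/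
lemma div_three_mem_cantorSet {x : ℝ} (hx : x ∈ cantorSet) : x / 3 ∈ cantorSet := by
  rw [cantorSet, Set.mem_iInter] at hx ⊢
  intro n
  match n with
  | 0 =>
    have h0 := hx 0
    simp only [preCantorSet_zero, Set.mem_Icc] at h0 ⊢
    constructor <;> linarith [h0.1, h0.2]
  | n + 1 =>
    rw [preCantorSet_succ]
    exact Set.mem_union_left _ ⟨x, hx n, rfl⟩

lemma div_three_add_mem_cantorSet {x : ℝ} (hx : x ∈ cantorSet) :
    x / 3 + 2 / 3 ∈ cantorSet := by
  rw [cantorSet, Set.mem_iInter] at hx ⊢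
  intro n
  match n with
  | 0 =>
    have h0 := hx 0
    simp only [preCantorSet_zero, Set.mem_Icc] at h0 ⊢
    constructor <;> linarith [h0.1, h0.2]
  | n + 1 =>
    rw [preCantorSet_succ]
    exact Set.mem_union_right _ ⟨x, hx n, by ring⟩

/-- The map `x ↦ x / 3` on the Cantor ternary set. -/
noncomputable def cantorOne : ↥cantorSet → ↥cantorSet :=
  fun x => ⟨x.1 / 3, div_three_mem_cantorSet x.2⟩

/-- The map `x ↦ x / 3 + 2 / 3` on the Cantor ternary set. -/
noncomputable def cantorTwo : ↥cantorSet → ↥cantorSet :=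
  fun x => ⟨x.1 / 3 + 2 / 3, div_three_add_mem_cantorSet x.2⟩


lemma preCantorSet_subset_unitInterval' : ∀ n, preCantorSet n ⊆ Set.Icc (0:ℝ) 1 := by
  intro n
  induction n with
  | zero => simp
  | succ n ih =>
    rintro x (⟨y, hy, rfl⟩ | ⟨y, hy, rfl⟩) <;>
      obtain ⟨h1, h2⟩ := ih hy <;> constructor <;> simp <;> linarith

lemma cantorSet_decomp {x : ℝ} (hx : x ∈ cantorSet) :
    (∃ y ∈ cantorSet, x = y / 3) ∨ (∃ y ∈ cantorSet, x = y / 3 + 2 / 3) := by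
  rw [cantorSet, Set.mem_iInter] at hx
  rcases le_or_gt x (1/2) with h | h
  · left
    refine ⟨3 * x, ?_, by ring⟩
    rw [cantorSet, Set.mem_iInter]
    intro n
    have h' := hx (n+1)
    rw [preCantorSet_succ] at h'
    rcases h' with ⟨y, hy, hyx⟩ | ⟨y, hy, hyx⟩
    · have : 3 * x = y := by simp only at hyx; linarith
      rwa [this]
    · exfalso
      obtain ⟨h1, _⟩ := preCantorSet_subset_unitInterval' n hy
      simp only at hyx; linarith
  · right
    refine ⟨3 * x - 2, ?_, by ring⟩
    rw [cantorSet, Set.mem_iInter]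
    intro n
    have h' := hx (n+1)
    rw [preCantorSet_succ] at h'
    rcases h' with ⟨y, hy, hyx⟩ | ⟨y, hy, hyx⟩
    · exfalso
      obtain ⟨_, h2⟩ := preCantorSet_subset_unitInterval' n hy
      simp only at hyx; linarith
    · have : 3 * x - 2 = y := by simp only at hyx; linarith
      rwa [this]

lemma cantorSet_accum : ∀ (n : ℕ), ∀ x ∈ cantorSet,
    ∃ y ∈ cantorSet, y ≠ x ∧ |y - x| ≤ (1/3 : ℝ) ^ n := by
  intro n
  induction n with
  | zero =>
    intro x hx
    obtain ⟨h0, h1⟩ := cantorSet_subset_unitInterval hx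
    by_cases h : x = 0
    · refine ⟨1/4, quarter_mem_cantorSet, by norm_num [h], ?_⟩
      rw [h]
      rw [show |(1:ℝ)/4 - 0| = 1/4 by rw [sub_zero, abs_of_nonneg] ; norm_num]
      norm_num
    · refine ⟨0, zero_mem_cantorSet, Ne.symm h, ?_⟩
      rw [zero_sub, abs_neg, abs_of_nonneg h0]
      simpa using h1
  | succ n ih =>
    intro x hx
    rcases cantorSet_decomp hx with ⟨z, hz, rfl⟩ | ⟨z, hz, rfl⟩
    · obtain ⟨y, hy, hne, hd⟩ := ih z hz
      refine ⟨y / 3, div_three_mem_cantorSet hy, fun h => hne (by linarith), ?_⟩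
      rw [show y/3 - z/3 = (y-z)/3 by ring, abs_div, abs_of_nonneg (by norm_num : (0:ℝ) ≤ 3),
        pow_succ]
      linarith
    · obtain ⟨y, hy, hne, hd⟩ := ih z hz
      refine ⟨y / 3 + 2/3, div_three_add_mem_cantorSet hy, fun h => hne (by linarith), ?_⟩
      rw [show y/3 + 2/3 - (z/3 + 2/3) = (y-z)/3 by ring, abs_div,
        abs_of_nonneg (by norm_num : (0:ℝ) ≤ 3), pow_succ]
      linarith

lemma seqComp_cons {X : Type*} {N : ℕ} (γ : Fin N → X → X) (i : Fin N) (l : List (Fin N))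
    (x : X) : seqComp γ (i :: l) x = γ i (seqComp γ l x) := rfl

/-- The base point `0` of the Cantor set. -/
noncomputable def z0 : ↥cantorSet := ⟨0, zero_mem_cantorSet⟩

lemma seqComp_val (l : List (Fin 2)) (x : ↥cantorSet) :
    (seqComp ![cantorOne, cantorTwo] l x).val
      = (1/3 : ℝ) ^ l.length * x.val + (seqComp ![cantorOne, cantorTwo] l z0).val := by
  induction l with
  | nil => simp [seqComp, z0]
  | cons i l ih =>
    rw [seqComp_cons, seqComp_cons]
    fin_cases i
    · show ((seqComp ![cantorOne, cantorTwo] l x).val) / 3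
        = _ * x.val + ((seqComp ![cantorOne, cantorTwo] l z0).val) / 3
      rw [ih, List.length_cons, pow_succ]
      ring
    · show ((seqComp ![cantorOne, cantorTwo] l x).val) / 3 + 2/3
        = _ * x.val + (((seqComp ![cantorOne, cantorTwo] l z0).val) / 3 + 2/3)
      rw [ih, List.length_cons, pow_succ]
      ring

lemma seqComp_const_mem (l : List (Fin 2)) (x : ↥cantorSet) :
    (seqComp ![cantorOne, cantorTwo] l x).val ∈ Set.Icc (0:ℝ) 1 :=
  cantorSet_subset_unitInterval (seqComp ![cantorOne, cantorTwo] l x).2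

lemma seqComp_const_inj : ∀ (k l : List (Fin 2)), k.length = l.length → k ≠ l →
    (seqComp ![cantorOne, cantorTwo] k z0).val ≠ (seqComp ![cantorOne, cantorTwo] l z0).val := by
  intro k
  induction k with
  | nil =>
    intro l hlen hne
    cases l with
    | nil => exact absurd rfl hne
    | cons b l' => simp at hlen
  | cons a k' ih =>
    intro l hlen hne
    cases l with
    | nil => simp at hlen
    | cons b l' =>
      rw [List.length_cons, List.length_cons] at hlen
      have hlen' : k'.length = l'.length := by omega
      obtain ⟨hk0, hk1⟩ := seqComp_const_mem k' z0
      obtain ⟨hl0, hl1⟩ := seqComp_const_mem l' z0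
      rw [seqComp_cons, seqComp_cons]
      fin_cases a <;> fin_cases b
      · show (seqComp ![cantorOne, cantorTwo] k' z0).val / 3
          ≠ (seqComp ![cantorOne, cantorTwo] l' z0).val / 3
        have hne' : k' ≠ l' := fun h => hne (by rw [h])
        intro h
        exact ih l' hlen' hne' (by linarith)
      · show (seqComp ![cantorOne, cantorTwo] k' z0).val / 3
          ≠ (seqComp ![cantorOne, cantorTwo] l' z0).val / 3 + 2/3
        intro h; linarith
      · show (seqComp ![cantorOne, cantorTwo] k' z0).val / 3 + 2/3
          ≠ (seqComp ![cantorOne, cantorTwo] l' z0).val / 3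
        intro h; linarith
      · show (seqComp ![cantorOne, cantorTwo] k' z0).val / 3 + 2/3
          ≠ (seqComp ![cantorOne, cantorTwo] l' z0).val / 3 + 2/3
        have hne' : k' ≠ l' := fun h => hne (by rw [h])
        intro h
        exact ih l' hlen' hne' (by linarith)

lemma coincide_subsingleton (k l : List (Fin 2)) (hkl : k ≠ l) :
    Set.Subsingleton {x : ↥cantorSet |
      seqComp ![cantorOne, cantorTwo] k x = seqComp ![cantorOne, cantorTwo] l x} := by
  intro x hx y hy
  simp only [Set.mem_setOf_eq] at hx hy
  have hx' := congrArg Subtype.val hx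
  have hy' := congrArg Subtype.val hy
  rw [seqComp_val k x, seqComp_val l x] at hx'
  rw [seqComp_val k y, seqComp_val l y] at hy'
  by_cases hlen : k.length = l.length
  · exfalso
    apply seqComp_const_inj k l hlen hkl
    rw [hlen] at hx'
    linarith
  · have hs : (1/3 : ℝ) ^ k.length ≠ (1/3 : ℝ) ^ l.length := by
      intro h
      rcases Nat.lt_or_ge k.length l.length with hl | hl
      · exact absurd h (ne_of_gt ((pow_lt_pow_iff_right_of_lt_one₀ (by norm_num) (by norm_num)).2 hl))
      · rcases Nat.lt_or_ge l.length k.length with hl2 | hl2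
        · exact absurd h (ne_of_lt ((pow_lt_pow_iff_right_of_lt_one₀ (by norm_num) (by norm_num)).2 hl2))
        · exact hlen (le_antisymm hl2 hl)
    have hvals : x.val = y.val := by
      have h1 : ((1/3 : ℝ) ^ k.length - (1/3 : ℝ) ^ l.length) * (x.val - y.val) = 0 := by
        linarith
      rcases mul_eq_zero.mp h1 with h | h
      · exact absurd (by linarith : (1/3 : ℝ) ^ k.length = (1/3 : ℝ) ^ l.length) hs
      · linarith
    exact Subtype.ext hvals

lemma subsingleton_isNowhereDense {S : Set ↥cantorSet} (hS : S.Subsingleton) :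
    IsNowhereDense S := by
  rcases hS.eq_empty_or_singleton with rfl | ⟨x, rfl⟩
  · simp [IsNowhereDense]
  · rw [IsNowhereDense, closure_singleton, Set.eq_empty_iff_forall_notMem]
    intro y hy
    have hyx : y = x := Set.mem_singleton_iff.mp (interior_subset hy)
    subst hyx
    have hint : interior ({y} : Set ↥cantorSet) = {y} :=
      Set.Subset.antisymm interior_subset (by simpa using hy)
    have hopen : IsOpen ({y} : Set ↥cantorSet) := hint ▸ isOpen_interior
    rw [Metric.isOpen_iff] at hopen
    obtain ⟨ε, hε, hb⟩ := hopen y rfl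
    obtain ⟨n, hn⟩ := exists_pow_lt_of_lt_one hε (by norm_num : (1/3 : ℝ) < 1)
    obtain ⟨y', hy', hne, hd⟩ := cantorSet_accum n y.val y.2
    have hmem : (⟨y', hy'⟩ : ↥cantorSet) ∈ Metric.ball y ε := by
      rw [Metric.mem_ball, Subtype.dist_eq, Real.dist_eq]
      exact lt_of_le_of_lt hd hn
    have := hb hmem
    rw [Set.mem_singleton_iff] at this
    exact hne (congrArg Subtype.val this)

/-- Example 6.1.7: `x ↦ x/3` and `x ↦ x/3 + 2/3` map the Cantor ternary set into itself,
their images are disjoint, and the resulting iterated function system on the Cantor set is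
essentially free. -/
theorem cantor_ifs_essentiallyFree :
    (∀ x ∈ cantorSet, x / 3 ∈ cantorSet) ∧
      (∀ x ∈ cantorSet, x / 3 + 2 / 3 ∈ cantorSet) ∧
      Disjoint ((fun x : ℝ => x / 3) '' cantorSet) ((fun x : ℝ => x / 3 + 2 / 3) '' cantorSet) ∧
      EssentiallyFree ![cantorOne, cantorTwo] := by
  refine ⟨fun x hx => div_three_mem_cantorSet hx, fun x hx => div_three_add_mem_cantorSet hx,
    ?_, ?_⟩
  · rw [Set.disjoint_left]
    rintro a ⟨x, hx, rfl⟩ ⟨y, hy, hxy⟩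
    obtain ⟨hx0, hx1⟩ := cantorSet_subset_unitInterval hx
    obtain ⟨hy0, hy1⟩ := cantorSet_subset_unitInterval hy
    simp only at hxy
    linarith
  · intro k l hkl
    exact subsingleton_isNowhereDense (coincide_subsingleton k l hkl)
end
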